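/- arXiv:1202.1940 — 2 statements merged into one kernel-verified Lean document; each statement's English description precedes it below -/
import Mathlib

section
/- Under the controlled ODE ẏ = -y² + (c_1 y + c_2)u(t) with controls u taking values in [w,1] (where 0 < w < 1 and y_s²/(c_1 y_s + c_2) < w), the solution map at a fixed time is monotone in the control: if u, ũ are measurable controls with u(t) ≤ ũ(t) for a.e. t, and y, ỹ are the corresponding solutions with the same initial condition y(t_0) = ỹ(t_0) = y_0 ∈ [0, ȳ), then y(t) ≤ ỹ(t) for all t ≥ t_0. -/
open MeasureTheory Set

lemma stmt5_abs_bound {c1 c2 M z v : ℝ} (hc1 : 0 < c1) (hc2 : 0 < c2) (hz : |z| ≤ M)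
    (hv0 : 0 ≤ v) (hv1 : v ≤ 1) : |(-z ^ 2 + (c1 * z + c2) * v)| ≤ M ^ 2 + (c1 * M + c2) := by
  rcases abs_le.1 hz with ⟨h1, h2⟩
  have hM : 0 ≤ M := (abs_nonneg z).trans hz
  rw [abs_le]
  constructor <;>
    nlinarith [sq_nonneg z, sq_nonneg (z - M), sq_nonneg (z + M),
      mul_le_mul_of_nonneg_right h2 hv0, mul_le_mul_of_nonneg_right h1 hv0,
      mul_nonneg (sub_nonneg.2 hv1) (by positivity : (0:ℝ) ≤ c1 * M + c2),
      mul_nonneg hc1.le hM]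

lemma stmt5_nonneg (t0 c1 c2 w : ℝ) (hc2 : 0 < c2) (hw : 0 < w)
    (u y : ℝ → ℝ) (hu : ∀ t, t0 ≤ t → u t ∈ Set.Icc w 1) (hy0 : 0 ≤ y t0)
    (hode : ∀ t, t0 ≤ t → HasDerivAt y (-(y t) ^ 2 + (c1 * y t + c2) * u t) t) :
    ∀ t, t0 ≤ t → 0 ≤ y t := by
  intro T hT
  have key : ∀ x ∈ Set.Icc t0 T, -y x ≤ (fun _ => (0:ℝ)) x := by
    apply image_le_of_deriv_right_lt_deriv_boundary
      (f := fun s => -y s) (f' := fun s => -(-(y s) ^ 2 + (c1 * y s + c2) * u s))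
      (B := fun _ => (0:ℝ)) (B' := fun _ => (0:ℝ))
    · intro x hx
      exact ((hode x hx.1).continuousAt.neg).continuousWithinAt
    · intro x hx
      exact ((hode x hx.1).neg).hasDerivWithinAt
    · simpa using hy0
    · intro x; exact hasDerivAt_const x 0
    · intro x hx hfx
      have hyx : y x = 0 := by simpa [neg_eq_zero] using hfx
      have hux := hu x hx.1
      simp only [hyx]
      nlinarith [hux.1, hux.2, hw, hc2]
  have := key T (right_mem_Icc.2 hT)
  simpa using this

theorem stmt_5 (t0 c1 c2 ys w y0 : ℝ) (hc1 : 0 < c1) (hc2 : 0 < c2) (hys : 0 < ys)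
    (hw : 0 < w) (hw1 : w < 1) (hwys : ys ^ 2 / (c1 * ys + c2) < w)
    (ybar : ℝ) (hybar : ybar = (c1 + Real.sqrt (c1 ^ 2 + 4 * c2)) / 2)
    (u utilde : ℝ → ℝ) (hu_meas : Measurable u) (hutilde_meas : Measurable utilde)
    (hu : ∀ t, t0 ≤ t → u t ∈ Set.Icc w 1)
    (hutilde : ∀ t, t0 ≤ t → utilde t ∈ Set.Icc w 1)
    (hle : ∀ᵐ t ∂(volume : Measure ℝ), u t ≤ utilde t)
    (y ytilde : ℝ → ℝ)
    (hy0 : y t0 = y0) (hytilde0 : ytilde t0 = y0) (hy0mem : y0 ∈ Set.Ico 0 ybar)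
    (hode : ∀ t, t0 ≤ t → HasDerivAt y (-(y t) ^ 2 + (c1 * y t + c2) * u t) t)
    (hodet : ∀ t, t0 ≤ t →
      HasDerivAt ytilde (-(ytilde t) ^ 2 + (c1 * ytilde t + c2) * utilde t) t) :
    ∀ t, t0 ≤ t → y t ≤ ytilde t := by
  intro T hT
  by_contra hcon
  push_neg at hcon
  have hy_nonneg : ∀ t, t0 ≤ t → 0 ≤ y t :=
    stmt5_nonneg t0 c1 c2 w hc2 hw u y hu (hy0 ▸ hy0mem.1) hode
  have hyt_nonneg : ∀ t, t0 ≤ t → 0 ≤ ytilde t :=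
    stmt5_nonneg t0 c1 c2 w hc2 hw utilde ytilde hutilde (hytilde0 ▸ hy0mem.1) hodet
  set Y : ℝ → ℝ := fun s => y (max s t0) with hYdef
  set Z : ℝ → ℝ := fun s => ytilde (max s t0) with hZdef
  have hmaxc : ∀ s : ℝ, ContinuousAt (fun t : ℝ => max t t0) s := fun s =>
    (continuous_id.max continuous_const).continuousAt
  have hYc : Continuous Y := by
    rw [continuous_iff_continuousAt]
    intro s
    exact ContinuousAt.comp (g := y) ((hode _ (le_max_right s t0)).continuousAt) (hmaxc s)
  have hZc : Continuous Z := by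
    rw [continuous_iff_continuousAt]
    intro s
    exact ContinuousAt.comp (g := ytilde) ((hodet _ (le_max_right s t0)).continuousAt) (hmaxc s)
  have hYeq : ∀ s, t0 ≤ s → Y s = y s := fun s hs => by simp [hYdef, max_eq_left hs]
  have hZeq : ∀ s, t0 ≤ s → Z s = ytilde s := fun s hs => by simp [hZdef, max_eq_left hs]
  set g : ℝ → ℝ := fun s => Y s - Z s with hgdef
  have hgc : Continuous g := hYc.sub hZc
  set gp : ℝ → ℝ := fun s => max (g s) 0 with hgpdef
  have hgpc : Continuous gp := hgc.max continuous_const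
  have hgp0 : ∀ s, 0 ≤ gp s := fun s => le_max_right _ _
  have hgT : 0 < g T := by
    have e1 := hYeq T hT; have e2 := hZeq T hT
    simp only [hgdef, e1, e2]
    linarith
  have hgt0 : g t0 = 0 := by
    simp only [hgdef, hYeq t0 le_rfl, hZeq t0 le_rfl, hy0, hytilde0, sub_self]
  -- last time g ≤ 0
  set S : Set ℝ := Set.Icc t0 T ∩ {τ | g τ ≤ 0} with hSdef
  have hSne : S.Nonempty := ⟨t0, ⟨left_mem_Icc.2 hT, hgt0.le⟩⟩
  have hSbdd : BddAbove S := BddAbove.mono Set.inter_subset_left bddAbove_Icc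
  have hSclosed : IsClosed S := isClosed_Icc.inter (isClosed_le hgc continuous_const)
  set r := sSup S with hrdef
  have hrS : r ∈ S := hSclosed.csSup_mem hSne hSbdd
  have ht0r : t0 ≤ r := hrS.1.1
  have hgr : g r ≤ 0 := hrS.2
  have hrT : r < T := lt_of_le_of_ne hrS.1.2 (fun h => by rw [h] at hgr; linarith)
  have hgpos : ∀ σ, σ ∈ Set.Ioc r T → 0 ≤ g σ := by
    intro σ hσ
    by_contra hneg
    push_neg at hneg
    have hmem : σ ∈ S := ⟨⟨ht0r.trans hσ.1.le, hσ.2⟩, hneg.le⟩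
    exact absurd (le_csSup hSbdd hmem) (not_le.2 hσ.1)
  -- the derivative function
  set F : ℝ → ℝ := fun s =>
    (-(Y s) ^ 2 + (c1 * Y s + c2) * u s) - (-(Z s) ^ 2 + (c1 * Z s + c2) * utilde s) with hFdef
  have hYm : Measurable Y := hYc.measurable
  have hZm : Measurable Z := hZc.measurable
  have hFm : Measurable F :=
    (((hYm.pow_const 2).neg).add (((hYm.const_mul c1).add_const c2).mul hu_meas)).sub
      (((hZm.pow_const 2).neg).add (((hZm.const_mul c1).add_const c2).mul hutilde_meas))
  obtain ⟨My, hMy⟩ := isCompact_Icc.exists_bound_of_continuousOn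
    (hYc.continuousOn : ContinuousOn Y (Set.Icc t0 T))
  obtain ⟨Mz, hMz⟩ := isCompact_Icc.exists_bound_of_continuousOn
    (hZc.continuousOn : ContinuousOn Z (Set.Icc t0 T))
  have hFbd : ∀ τ ∈ Set.Icc t0 T,
      ‖F τ‖ ≤ (My ^ 2 + (c1 * My + c2)) + (Mz ^ 2 + (c1 * Mz + c2)) := by
    intro τ hτ
    have huτ := hu τ hτ.1
    have hutτ := hutilde τ hτ.1
    have h1 := stmt5_abs_bound hc1 hc2 (by simpa using hMy τ hτ)
      (le_trans hw.le huτ.1) huτ.2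
    have h2 := stmt5_abs_bound hc1 hc2 (by simpa using hMz τ hτ)
      (le_trans hw.le hutτ.1) hutτ.2
    calc ‖F τ‖ ≤ ‖-(Y τ) ^ 2 + (c1 * Y τ + c2) * u τ‖ +
        ‖-(Z τ) ^ 2 + (c1 * Z τ + c2) * utilde τ‖ := norm_sub_le _ _
      _ ≤ (My ^ 2 + (c1 * My + c2)) + (Mz ^ 2 + (c1 * Mz + c2)) := by
          rw [Real.norm_eq_abs, Real.norm_eq_abs]; exact add_le_add h1 h2
  have hFint : IntegrableOn F (Set.Icc t0 T) volume :=
    Measure.integrableOn_of_bounded measure_Icc_lt_top.ne hFm.aestronglyMeasurable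
      ((ae_restrict_iff' measurableSet_Icc).2 (Filter.Eventually.of_forall hFbd))
  have hFii : ∀ σ, σ ∈ Set.Icc r T → IntervalIntegrable F volume r σ := by
    intro σ hσ
    rw [intervalIntegrable_iff_integrableOn_Icc_of_le hσ.1]
    exact hFint.mono_set (Set.Icc_subset_Icc ht0r hσ.2)
  have hr_ae : ∀ᵐ τ ∂(volume : Measure ℝ), τ ≠ r := by
    have : (volume : Measure ℝ) {r} = 0 := Real.volume_singleton
    rw [Filter.eventually_iff, mem_ae_iff]
    simpa [compl_setOf] using this
  -- key chain inequality
  have hchain : ∀ σ, σ ∈ Set.Ioc r T → g σ ≤ c1 * ∫ τ in r..σ, gp τ := by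
    intro σ hσ
    have hrσ : r ≤ σ := hσ.1.le
    have hftc : ∫ τ in r..σ, F τ = (y σ - ytilde σ) - (y r - ytilde r) := by
      apply intervalIntegral.integral_eq_sub_of_hasDerivAt
      · intro x hx
        rw [uIcc_of_le hrσ] at hx
        have hx0 : t0 ≤ x := ht0r.trans hx.1
        have e1 : Y x = y x := hYeq x hx0
        have e2 : Z x = ytilde x := hZeq x hx0
        have h := (hode x hx0).sub (hodet x hx0)
        simp only [hFdef, e1, e2]
        exact h
      · exact hFii σ ⟨hrσ, hσ.2⟩
    have hmono : ∫ τ in r..σ, F τ ≤ ∫ τ in r..σ, c1 * gp τ := by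
      apply intervalIntegral.integral_mono_ae_restrict hrσ (hFii σ ⟨hrσ, hσ.2⟩)
        ((continuous_const.mul hgpc).intervalIntegrable r σ)
      rw [Filter.EventuallyLE, ae_restrict_iff' measurableSet_Icc]
      filter_upwards [hle, hr_ae] with τ hτle hτr hmem
      have hτr' : r < τ := lt_of_le_of_ne hmem.1 (Ne.symm hτr)
      have hτ0 : t0 ≤ τ := ht0r.trans hmem.1
      have e1 : Y τ = y τ := hYeq τ hτ0
      have e2 : Z τ = ytilde τ := hZeq τ hτ0
      have hgτ : 0 ≤ g τ := hgpos τ ⟨hτr', hmem.2.trans hσ.2⟩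
      have hgτ' : 0 ≤ y τ - ytilde τ := by
        simpa [hgdef, e1, e2] using hgτ
      have ha := hy_nonneg τ hτ0
      have hb := hyt_nonneg τ hτ0
      have hut := hutilde τ hτ0
      have h0 : 0 ≤ utilde τ := le_trans hw.le hut.1
      have hgoal : F τ ≤ c1 * (y τ - ytilde τ) := by
        simp only [hFdef, e1, e2]
        nlinarith [mul_nonneg (add_nonneg ha hb) hgτ',
          mul_nonneg (mul_nonneg hc1.le hgτ') (sub_nonneg.2 hut.2),
          mul_nonneg (add_nonneg (mul_nonneg hc1.le ha) hc2.le) (sub_nonneg.2 hτle)]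
      have hgpτ : gp τ = y τ - ytilde τ := by
        rw [hgpdef]
        simp only [hgdef, e1, e2]
        exact max_eq_left hgτ'
      show F τ ≤ c1 * gp τ
      rw [hgpτ]
      exact hgoal
    have hveq : g σ - g r = (y σ - ytilde σ) - (y r - ytilde r) := by
      have hσ0 : t0 ≤ σ := ht0r.trans hrσ
      simp only [hgdef, hYeq σ hσ0, hZeq σ hσ0, hYeq r ht0r, hZeq r ht0r]
    have hconst : ∫ τ in r..σ, c1 * gp τ = c1 * ∫ τ in r..σ, gp τ := by
      exact intervalIntegral.integral_const_mul c1 gp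
    nlinarith [hftc, hmono, hveq, hgr, hconst]
  -- Gronwall
  set G : ℝ → ℝ := fun σ => ∫ τ in r..σ, gp τ with hGdef
  have hGd : ∀ σ, HasDerivAt G (gp σ) σ := fun σ =>
    (hgpc.integral_hasStrictDerivAt r σ).hasDerivAt
  have hGnn : ∀ σ, r ≤ σ → 0 ≤ G σ := fun σ hσ =>
    intervalIntegral.integral_nonneg hσ fun τ _ => hgp0 τ
  have hGbound : ∀ σ ∈ Set.Icc r T, ‖G σ‖ ≤ gronwallBound 0 c1 0 (σ - r) := by
    apply norm_le_gronwallBound_of_norm_deriv_right_le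
    · exact fun σ _ => (hGd σ).continuousAt.continuousWithinAt
    · exact fun σ _ => (hGd σ).hasDerivWithinAt
    · simp [hGdef]
    · intro σ hσ
      have h1 : 0 ≤ G σ := hGnn σ hσ.1
      have h2 : gp σ ≤ c1 * G σ := by
        rcases eq_or_lt_of_le hσ.1 with heq | hlt
        · have hGr : G r = 0 := by simp [hGdef]
          have : gp r = 0 := by
            rw [hgpdef]; exact max_eq_right hgr
          rw [← heq, hGr, this, mul_zero]
        · have hch := hchain σ ⟨hlt, hσ.2.le⟩
          have : gp σ = g σ := max_eq_left (hgpos σ ⟨hlt, hσ.2.le⟩)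
          rw [this]
          exact hch
      rw [Real.norm_eq_abs, Real.norm_eq_abs, abs_of_nonneg (hgp0 σ), abs_of_nonneg h1]
      linarith
  have hGT : G T = 0 := by
    have := hGbound T (right_mem_Icc.2 hrT.le)
    rw [gronwallBound_ε0] at this
    simp only [zero_mul] at this
    have h1 : 0 ≤ G T := hGnn T hrT.le
    rw [Real.norm_eq_abs, abs_of_nonneg h1] at this
    linarith
  have hfinal := hchain T ⟨hrT, le_rfl⟩
  have h0 : (∫ (τ : ℝ) in r..T, gp τ) = 0 := hGT
  rw [h0, mul_zero] at hfinal
  linarith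
end

section
/- (Continuity of the exit time.) Assume y_s²/(c_1 y_s + c_2) < w < 1 and t_1 > t̂_0 where t̂_0 is the exit time from 0 under constant control w. Let y_0^n → y_0 in [0, y_s] and u^n ⇀* u in L^∞((t_0,t_1);[w,1]). Let e(y_0, u) denote the unique time t ∈ [t_0, t_1] at which the solution of ẏ = -y² + (c_1 y + c_2)u(t), y(t_0) = y_0, reaches y_s. Then e(y_0^n, u^n) → e(y_0, u). -/
set_option maxHeartbeats 2000000
open MeasureTheory Filter Set

lemma right_slope_nonneg {s c m : ℝ} {g : ℝ → ℝ} (hsc : s < c) (hd : HasDerivAt g m s)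
    (hgt : ∀ r ∈ Set.Ioc s c, g s ≤ g r) : 0 ≤ m := by
  have hslope := hasDerivAt_iff_tendsto_slope.1 hd
  have hslope' : Tendsto (slope g s) (nhdsWithin s (Set.Ioi s)) (nhds m) :=
    hslope.mono_left (nhdsWithin_mono _ (fun x hx => ne_of_gt hx))
  refine ge_of_tendsto hslope' ?_
  filter_upwards [Ioo_mem_nhdsGT_of_mem (Set.left_mem_Ico.2 hsc)] with r hr
  have h1 : g s ≤ g r := hgt r ⟨hr.1, hr.2.le⟩
  have h2 : 0 < r - s := sub_pos.2 hr.1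
  have h3 : 0 ≤ g r - g s := sub_nonneg.2 h1
  rw [slope_def_field]
  exact div_nonneg h3 h2.le

lemma left_slope_nonpos {a b m : ℝ} {g : ℝ → ℝ} (hab : a < b) (hd : HasDerivAt g m b)
    (hge : ∀ r ∈ Set.Ico a b, g b ≤ g r) : m ≤ 0 := by
  have hslope := hasDerivAt_iff_tendsto_slope.1 hd
  have hslope' : Tendsto (slope g b) (nhdsWithin b (Set.Iio b)) (nhds m) :=
    hslope.mono_left (nhdsWithin_mono _ (fun x hx => ne_of_lt hx))
  refine le_of_tendsto hslope' ?_
  filter_upwards [Ioo_mem_nhdsLT_of_mem (Set.right_mem_Ioc.2 hab)] with r hr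
  have h1 : 0 ≤ g r - g b := sub_nonneg.2 (hge r ⟨hr.1.le, hr.2⟩)
  have h2 : r - b < 0 := sub_neg.2 hr.2
  rw [slope_def_field]
  exact div_nonpos_of_nonneg_of_nonpos h1 h2.le

/-- Barrier lemma (upper): if the vector field points strictly down at level `B`,
trajectories starting below `B` stay below `B`. -/
lemma barrier_up {a b B : ℝ} {g F : ℝ → ℝ}
    (hg : ∀ t ∈ Set.Icc a b, HasDerivAt g (F t) t)
    (h0 : g a ≤ B) (hF : ∀ t ∈ Set.Icc a b, g t = B → F t < 0) :
    ∀ t ∈ Set.Icc a b, g t ≤ B := by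
  intro t ht
  by_contra hgt
  push_neg at hgt
  have hat : a ≤ t := ht.1
  have hsubIcc : Set.Icc a t ⊆ Set.Icc a b := Set.Icc_subset_Icc le_rfl ht.2
  set S : Set ℝ := {r | r ∈ Set.Icc a t ∧ g r ≤ B} with hS
  have hne : S.Nonempty := ⟨a, ⟨Set.left_mem_Icc.2 hat, h0⟩⟩
  have hbdd : BddAbove S := ⟨t, fun r hr => hr.1.2⟩
  set s := sSup S with hs
  have hscl : s ∈ closure S := csSup_mem_closure hne hbdd
  have hsIcc : s ∈ Set.Icc a t :=
    closure_minimal (fun r hr => hr.1) isClosed_Icc hscl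
  have hsab : s ∈ Set.Icc a b := hsubIcc hsIcc
  have hcont : ∀ r ∈ Set.Icc a b, ContinuousAt g r :=
    fun r hr => (hg r hr).continuousAt
  -- g s ≤ B by taking limits along S
  have hgsB : g s ≤ B := by
    have hnb : (nhdsWithin s S).NeBot := mem_closure_iff_nhdsWithin_neBot.1 hscl
    have : Tendsto g (nhdsWithin s S) (nhds (g s)) :=
      ((hcont s hsab).continuousWithinAt : ContinuousWithinAt g S s)
    refine le_of_tendsto this ?_
    filter_upwards [self_mem_nhdsWithin] with r hr using hr.2
  have hst : s < t := lt_of_le_of_ne hsIcc.2 (fun h => absurd hgsB (by rw [h]; exact not_le.2 hgt))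
  -- everything in (s, t] is above B
  have habove : ∀ r ∈ Set.Ioc s t, B < g r := by
    intro r hr
    by_contra hle
    push_neg at hle
    have : r ∈ S := ⟨⟨hsIcc.1.trans hr.1.le, hr.2⟩, hle⟩
    exact absurd (le_csSup hbdd this) (not_le.2 hr.1)
  -- g s = B, by IVT if g s < B
  have hgsB' : g s = B := by
    rcases lt_or_eq_of_le hgsB with hlt | heq
    · have hconts : ContinuousOn g (Set.Icc s t) := fun r hr =>
        (hcont r (hsubIcc (Set.Icc_subset_Icc hsIcc.1 le_rfl hr))).continuousWithinAt
      have : B ∈ Set.Ioo (g s) (g t) := ⟨hlt, hgt⟩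
      obtain ⟨r, hr, hgr⟩ := intermediate_value_Ioo hst.le hconts this
      exact absurd hgr (ne_of_gt (habove r ⟨hr.1, hr.2.le⟩))
    · exact heq
  have hFs : F s < 0 := hF s hsab hgsB'
  have : 0 ≤ F s := by
    refine right_slope_nonneg hst (hg s hsab) ?_
    intro r hr
    rw [hgsB']
    exact (habove r hr).le
  exact absurd hFs (not_lt.2 this)

lemma barrier_down {a b B : ℝ} {g F : ℝ → ℝ}
    (hg : ∀ t ∈ Set.Icc a b, HasDerivAt g (F t) t)
    (h0 : B ≤ g a) (hF : ∀ t ∈ Set.Icc a b, g t = B → 0 < F t) :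
    ∀ t ∈ Set.Icc a b, B ≤ g t := by
  have := barrier_up (g := fun r => -g r) (F := fun r => -F r) (B := -B)
    (fun t ht => (hg t ht).neg) (neg_le_neg h0)
    (fun t ht hgt => neg_neg_iff_pos.2 (hF t ht (by linarith [neg_eq_iff_eq_neg.1 hgt])))
  intro t ht
  have h2 := this t ht
  simp only [neg_le_neg_iff] at h2
  linarith

/-- Trajectories of the maturity ODE stay in `[0, c1 + c2 + ys + 1]`. -/
lemma traj_mem {t0 t1 c1 c2 ys w : ℝ} (hc1 : 0 < c1) (hc2 : 0 < c2) (hys : 0 < ys)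
    (hw0 : 0 < w) {g v : ℝ → ℝ} (hg0 : g t0 ∈ Set.Icc 0 ys)
    (hv : ∀ t ∈ Set.Icc t0 t1, v t ∈ Set.Icc w 1)
    (hgode : ∀ t ∈ Set.Icc t0 t1, HasDerivAt g (-(g t) ^ 2 + (c1 * g t + c2) * v t) t) :
    ∀ t ∈ Set.Icc t0 t1, g t ∈ Set.Icc 0 (c1 + c2 + ys + 1) := by
  intro t ht
  constructor
  · refine barrier_down hgode hg0.1 ?_ t ht
    intro r hr hgr
    have hvr := hv r hr
    rw [hgr]
    have : (0:ℝ) < c2 * v r := mul_pos hc2 (lt_of_lt_of_le hw0 hvr.1)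
    nlinarith
  · refine barrier_up hgode (hg0.2.trans (by linarith)) ?_ t ht
    intro r hr hgr
    have hvr := hv r hr
    rw [hgr]
    set B := c1 + c2 + ys + 1 with hB
    have hBpos : (0:ℝ) < B := by positivity
    have h1 : (c1 * B + c2) * v r ≤ c1 * B + c2 := by
      have : (0:ℝ) < c1 * B + c2 := by positivity
      nlinarith [hvr.2, lt_of_lt_of_le hw0 hvr.1]
    nlinarith [sq_nonneg B]

/-- The level `ys` is reached at most once. -/
lemma cross_unique {t0 t1 c1 c2 ys w : ℝ} (hc1 : 0 < c1) (hc2 : 0 < c2) (hys : 0 < ys)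
    (hw1 : ys ^ 2 / (c1 * ys + c2) < w) {g v : ℝ → ℝ}
    (hv : ∀ t ∈ Set.Icc t0 t1, v t ∈ Set.Icc w 1)
    (hgode : ∀ t ∈ Set.Icc t0 t1, HasDerivAt g (-(g t) ^ 2 + (c1 * g t + c2) * v t) t) :
    ∀ s ∈ Set.Icc t0 t1, ∀ t ∈ Set.Icc t0 t1, g s = ys → g t = ys → s = t := by
  have hden : (0:ℝ) < c1 * ys + c2 := by positivity
  have hkey : ∀ r ∈ Set.Icc t0 t1, g r = ys → 0 < -(g r) ^ 2 + (c1 * g r + c2) * v r := by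
    intro r hr hgr
    have hvr := hv r hr
    rw [hgr]
    have h1 : ys ^ 2 < w * (c1 * ys + c2) := (div_lt_iff₀ hden).1 hw1
    have h2 : w * (c1 * ys + c2) ≤ v r * (c1 * ys + c2) :=
      mul_le_mul_of_nonneg_right hvr.1 hden.le
    nlinarith
  -- main: if s < t then contradiction
  have main : ∀ s ∈ Set.Icc t0 t1, ∀ t ∈ Set.Icc t0 t1, g s = ys → g t = ys → ¬ s < t := by
    intro s hs t ht hgs hgt hst
    have hsub : Set.Icc s t ⊆ Set.Icc t0 t1 := Set.Icc_subset_Icc hs.1 ht.2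
    have hge : ∀ r ∈ Set.Icc s t, ys ≤ g r := by
      refine barrier_down (fun r hr => hgode r (hsub hr)) (le_of_eq hgs.symm) ?_
      intro r hr hgr
      exact hkey r (hsub hr) hgr
    have hle : (-(g t) ^ 2 + (c1 * g t + c2) * v t) ≤ 0 := by
      refine left_slope_nonpos hst (hgode t ht) ?_
      intro r hr
      rw [hgt]
      exact hge r ⟨hr.1, hr.2.le⟩
    exact absurd (hkey t ht hgt) (not_lt.2 hle)
  intro s hs t ht hgs hgt
  rcases lt_trichotomy s t with h | h | h
  · exact absurd h (main s hs t ht hgs hgt)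
  · exact h
  · exact absurd h (main t ht s hs hgt hgs)

lemma integrableOn_of_bounded' {f : ℝ → ℝ} {s : Set ℝ} (hs : MeasurableSet s)
    (hμ : volume s < ⊤) (hf : AEStronglyMeasurable f (volume.restrict s)) {C : ℝ}
    (hC : ∀ x ∈ s, |f x| ≤ C) : IntegrableOn f s := by
  refine Integrable.mono' (g := fun _ => C) ((integrableOn_const_iff (C := C)).2 (Or.inr hμ)) hf ?_
  exact (ae_restrict_iff' hs).2 (ae_of_all _ fun x hx => by simpa using hC x hx)

theorem stmt_14 (t0 t1 c1 c2 ys w : ℝ) (hc1 : 0 < c1) (hc2 : 0 < c2) (hys : 0 < ys)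
    (hw1 : ys ^ 2 / (c1 * ys + c2) < w) (hw2 : w < 1)
    -- exit time th0 from 0 under constant control w
    (z : ℝ → ℝ) (hz0 : z t0 = 0)
    (hzode : ∀ t, t0 ≤ t → HasDerivAt z (-(z t) ^ 2 + (c1 * z t + c2) * w) t)
    (th0 : ℝ) (hth0mem : t0 ≤ th0) (hth0 : z th0 = ys) (ht1 : th0 < t1)
    -- initial maturities
    (y0 : ℝ) (y0n : ℕ → ℝ) (hy0 : y0 ∈ Set.Icc 0 ys)
    (hy0n : ∀ n, y0n n ∈ Set.Icc 0 ys)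
    (hy0conv : Tendsto y0n atTop (nhds y0))
    -- controls and weak-* convergence
    (un : ℕ → ℝ → ℝ) (u : ℝ → ℝ)
    (hun_meas : ∀ n, Measurable (un n)) (hu_meas : Measurable u)
    (hun : ∀ n, ∀ t ∈ Set.Icc t0 t1, un n t ∈ Set.Icc w 1)
    (hu : ∀ t ∈ Set.Icc t0 t1, u t ∈ Set.Icc w 1)
    (hweak : ∀ φ : ℝ → ℝ, IntegrableOn φ (Set.Icc t0 t1) →
      Tendsto (fun n => ∫ t in Set.Icc t0 t1, un n t * φ t) atTop
        (nhds (∫ t in Set.Icc t0 t1, u t * φ t)))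
    -- trajectories
    (yn : ℕ → ℝ → ℝ) (y : ℝ → ℝ)
    (hyn0 : ∀ n, yn n t0 = y0n n) (hy0' : y t0 = y0)
    (hynode : ∀ n, ∀ t ∈ Set.Icc t0 t1,
      HasDerivAt (yn n) (-(yn n t) ^ 2 + (c1 * yn n t + c2) * un n t) t)
    (hyode : ∀ t ∈ Set.Icc t0 t1,
      HasDerivAt y (-(y t) ^ 2 + (c1 * y t + c2) * u t) t)
    -- exit times
    (en : ℕ → ℝ) (e : ℝ)
    (hen : ∀ n, en n ∈ Set.Icc t0 t1) (he : e ∈ Set.Icc t0 t1)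
    (henexit : ∀ n, yn n (en n) = ys) (heexit : y e = ys) :
    Tendsto en atTop (nhds e) := by
  have ht01 : t0 < t1 := lt_of_le_of_lt hth0mem ht1
  have hw0 : (0:ℝ) < w := lt_of_le_of_lt (by positivity) hw1
  set B := c1 + c2 + ys + 1 with hB
  have hBpos : (0:ℝ) < B := by positivity
  have hyB : ∀ t ∈ Set.Icc t0 t1, y t ∈ Set.Icc 0 B :=
    traj_mem hc1 hc2 hys hw0 (by rw [hy0']; exact hy0) hu hyode
  have hynB : ∀ n, ∀ t ∈ Set.Icc t0 t1, yn n t ∈ Set.Icc 0 B :=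
    fun n => traj_mem hc1 hc2 hys hw0 (by rw [hyn0 n]; exact hy0n n) (hun n) (hynode n)
  set K := 2 * B + c1 with hKdef
  have hK : (0:ℝ) < K := by positivity
  set C := Real.exp (K * (t1 - t0)) with hCdef
  have hCpos : (0:ℝ) < C := Real.exp_pos _
  have hC1 : (1:ℝ) ≤ C := Real.one_le_exp (by nlinarith)
  -- continuity and measurability facts
  have hy_contAt : ∀ t ∈ Set.Icc t0 t1, ContinuousAt y t :=
    fun t ht => (hyode t ht).differentiableAt.continuousAt
  have hyn_contAt : ∀ n, ∀ t ∈ Set.Icc t0 t1, ContinuousAt (yn n) t :=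
    fun n t ht => (hynode n t ht).differentiableAt.continuousAt
  have hy_meas : AEStronglyMeasurable y (volume.restrict (Set.Icc t0 t1)) :=
    (ContinuousOn.aestronglyMeasurable
      (fun t ht => (hy_contAt t ht).continuousWithinAt) measurableSet_Icc)
  have hyn_meas : ∀ n, AEStronglyMeasurable (yn n) (volume.restrict (Set.Icc t0 t1)) :=
    fun n => (ContinuousOn.aestronglyMeasurable
      (fun t ht => (hyn_contAt n t ht).continuousWithinAt) measurableSet_Icc)
  have hvolIcc : volume (Set.Icc t0 t1) < ⊤ := by
    rw [Real.volume_Icc]; exact ENNReal.ofReal_lt_top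
  have hu_bd : ∀ t ∈ Set.Icc t0 t1, |u t| ≤ 1 := by
    intro t ht
    have := hu t ht
    rw [abs_le]; constructor <;> [linarith [this.1]; exact this.2]
  have hun_bd : ∀ n, ∀ t ∈ Set.Icc t0 t1, |un n t| ≤ 1 := by
    intro n t ht
    have := hun n t ht
    rw [abs_le]; constructor <;> [linarith [this.1]; exact this.2]
  have hcyc_bd : ∀ s ∈ Set.Icc t0 t1, |c1 * y s + c2| ≤ c1 * B + c2 := by
    intro s hs
    have := hyB s hs
    rw [abs_le]; constructor <;> nlinarith [this.1, this.2]
  -- the forcing terms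
  set ψ : ℕ → ℝ → ℝ := fun n s => (c1 * y s + c2) * (un n s - u s) with hψdef
  set L := 2 * (c1 * B + c2) with hLdef
  have hLpos : (0:ℝ) < L := by positivity
  have hψ_bd : ∀ n, ∀ s ∈ Set.Icc t0 t1, |ψ n s| ≤ L := by
    intro n s hs
    rw [hψdef]
    simp only []
    rw [abs_mul]
    have h1 := hcyc_bd s hs
    have h2 : |un n s - u s| ≤ 2 := by
      have := hun_bd n s hs; have := hu_bd s hs
      calc |un n s - u s| ≤ |un n s| + |u s| := abs_sub _ _
        _ ≤ 2 := by linarith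
    calc |c1 * y s + c2| * |un n s - u s| ≤ (c1 * B + c2) * 2 := by
          apply mul_le_mul h1 h2 (abs_nonneg _) (by positivity)
      _ = L := by rw [hLdef]; ring
  have hψ_meas : ∀ n, AEStronglyMeasurable (ψ n) (volume.restrict (Set.Icc t0 t1)) := by
    intro n
    exact ((hy_meas.const_mul c1).add aestronglyMeasurable_const).mul
      (((hun_meas n).sub hu_meas).aestronglyMeasurable.restrict)
  have hψ_int : ∀ n, IntegrableOn (ψ n) (Set.Icc t0 t1) := fun n =>
    integrableOn_of_bounded' measurableSet_Icc hvolIcc (hψ_meas n) (hψ_bd n)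
  have hψ_ii : ∀ n, ∀ s ∈ Set.Icc t0 t1, ∀ t ∈ Set.Icc t0 t1,
      IntervalIntegrable (ψ n) volume s t := by
    intro n s hs t ht
    exact ((hψ_int n).mono_set (Set.uIcc_subset_Icc hs ht)).intervalIntegrable
  set A : ℕ → ℝ → ℝ := fun n t => ∫ s in t0..t, ψ n s with hAdef
  have ht0mem : t0 ∈ Set.Icc t0 t1 := Set.left_mem_Icc.2 ht01.le
  -- Step A: pointwise convergence of A to 0
  have hApt : ∀ t ∈ Set.Icc t0 t1, Tendsto (fun n => A n t) atTop (nhds 0) := by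
    intro t ht
    have hsub : Set.Icc t0 t ⊆ Set.Icc t0 t1 := Set.Icc_subset_Icc le_rfl ht.2
    set φ : ℝ → ℝ := (Set.Icc t0 t).indicator (fun s => c1 * y s + c2) with hφdef
    have hφ_meas : AEStronglyMeasurable φ (volume.restrict (Set.Icc t0 t1)) :=
      ((hy_meas.const_mul c1).add aestronglyMeasurable_const).indicator measurableSet_Icc
    have hφ_bd : ∀ s ∈ Set.Icc t0 t1, |φ s| ≤ c1 * B + c2 := by
      intro s hs
      rw [hφdef]
      by_cases h : s ∈ Set.Icc t0 t
      · rw [Set.indicator_of_mem h]; exact hcyc_bd s hs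
      · rw [Set.indicator_of_notMem h, abs_zero]; positivity
    have hφ_int : IntegrableOn φ (Set.Icc t0 t1) :=
      integrableOn_of_bounded' measurableSet_Icc hvolIcc hφ_meas hφ_bd
    have htransform : ∀ v : ℝ → ℝ,
        (∫ s in Set.Icc t0 t1, v s * φ s) = ∫ s in t0..t, (c1 * y s + c2) * v s := by
      intro v
      have h1 : ∀ s, v s * φ s
          = (Set.Icc t0 t).indicator (fun r => (c1 * y r + c2) * v r) s := by
        intro s
        by_cases hs : s ∈ Set.Icc t0 t
        · rw [hφdef, Set.indicator_of_mem hs, Set.indicator_of_mem hs, mul_comm]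
        · rw [hφdef, Set.indicator_of_notMem hs, Set.indicator_of_notMem hs, mul_zero]
      calc (∫ s in Set.Icc t0 t1, v s * φ s)
          = ∫ s in Set.Icc t0 t1,
              (Set.Icc t0 t).indicator (fun r => (c1 * y r + c2) * v r) s := by
            exact integral_congr_ae (ae_of_all _ h1)
        _ = ∫ s in Set.Icc t0 t,
              (c1 * y s + c2) * v s ∂((volume.restrict (Set.Icc t0 t1))) := by
            rw [integral_indicator measurableSet_Icc]
        _ = ∫ s in Set.Icc t0 t, (c1 * y s + c2) * v s := by
            rw [Measure.restrict_restrict measurableSet_Icc,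
              Set.inter_eq_self_of_subset_left hsub]
        _ = ∫ s in Set.Ioc t0 t, (c1 * y s + c2) * v s := integral_Icc_eq_integral_Ioc
        _ = ∫ s in t0..t, (c1 * y s + c2) * v s :=
            (intervalIntegral.integral_of_le ht.1).symm
    have hgen : ∀ v : ℝ → ℝ, Measurable v → (∀ s ∈ Set.Icc t0 t1, |v s| ≤ 1) →
        IntervalIntegrable (fun s => (c1 * y s + c2) * v s) volume t0 t := by
      intro v hv hvbd
      refine ((integrableOn_of_bounded' measurableSet_Icc hvolIcc
        (((hy_meas.const_mul c1).add aestronglyMeasurable_const).mul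
          hv.aestronglyMeasurable.restrict) (C := c1 * B + c2) ?_).mono_set
        (Set.uIcc_subset_Icc ht0mem ht)).intervalIntegrable
      intro s hs
      simp only [Pi.mul_apply, Pi.add_apply]
      rw [abs_mul]
      calc |c1 * y s + c2| * |v s| ≤ (c1 * B + c2) * 1 :=
            mul_le_mul (hcyc_bd s hs) (hvbd s hs) (abs_nonneg _) (by positivity)
        _ = c1 * B + c2 := mul_one _
    have hsplit : ∀ n, A n t = (∫ s in t0..t, (c1 * y s + c2) * un n s)
        - (∫ s in t0..t, (c1 * y s + c2) * u s) := by
      intro n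
      rw [hAdef]
      simp only []
      rw [← intervalIntegral.integral_sub (hgen (un n) (hun_meas n) (hun_bd n))
        (hgen u hu_meas hu_bd)]
      refine intervalIntegral.integral_congr ?_
      intro s _
      rw [hψdef]
      ring
    have hconv := (hweak φ hφ_int).sub_const (∫ s in Set.Icc t0 t1, u s * φ s)
    rw [sub_self] at hconv
    refine hconv.congr ?_
    intro n
    rw [hsplit n, ← htransform (un n), ← htransform u]
  -- Step B: uniform Lipschitz bound for A
  have hAlip : ∀ n, ∀ s ∈ Set.Icc t0 t1, ∀ t ∈ Set.Icc t0 t1,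
      |A n t - A n s| ≤ L * |t - s| := by
    intro n s hs t ht
    have h1 : A n t - A n s = ∫ r in s..t, ψ n r :=
      intervalIntegral.integral_interval_sub_left (hψ_ii n t0 ht0mem t ht)
        (hψ_ii n t0 ht0mem s hs)
    rw [h1, ← Real.norm_eq_abs]
    refine intervalIntegral.norm_integral_le_of_norm_le_const ?_
    intro x hx
    rw [Real.norm_eq_abs]
    exact hψ_bd n x (Set.uIcc_subset_Icc hs ht (Set.Ioc_subset_Icc_self hx))
  -- Step C: uniform smallness of A
  have hAunif : ∀ ε > 0, ∀ᶠ n in atTop, ∀ t ∈ Set.Icc t0 t1, |A n t| ≤ ε := by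
    intro ε hε
    have hρ : (0:ℝ) < ε / (2 * L) := by positivity
    have hcov : Set.Icc t0 t1 ⊆ ⋃ r : Set.Icc t0 t1, Metric.ball (r : ℝ) (ε / (2 * L)) :=
      fun x hx => Set.mem_iUnion.2 ⟨⟨x, hx⟩, Metric.mem_ball_self hρ⟩
    obtain ⟨F, hF⟩ := isCompact_Icc.elim_finite_subcover
      (fun r : Set.Icc t0 t1 => Metric.ball (r : ℝ) (ε / (2 * L)))
      (fun r => Metric.isOpen_ball) hcov
    have hev : ∀ᶠ n in atTop, ∀ r ∈ F, |A n (r : ℝ)| ≤ ε / 2 := by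
      rw [eventually_all_finset]
      intro r hr
      have h2 := NormedAddCommGroup.tendsto_nhds_zero.1 (hApt (r : ℝ) r.2) (ε / 2)
        (half_pos hε)
      filter_upwards [h2] with n hn
      rw [Real.norm_eq_abs] at hn
      exact hn.le
    filter_upwards [hev] with n hn t ht
    obtain ⟨r, hrF, htr⟩ := Set.mem_iUnion₂.1 (hF ht)
    rw [Metric.mem_ball, Real.dist_eq] at htr
    have h3 : |A n t| ≤ |A n (r : ℝ)| + |A n t - A n (r : ℝ)| := by
      calc |A n t| = |A n (r : ℝ) + (A n t - A n (r : ℝ))| := by ring_nf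
        _ ≤ |A n (r : ℝ)| + |A n t - A n (r : ℝ)| := abs_add_le _ _
    have h4 : |A n t - A n (r : ℝ)| ≤ L * |t - (r : ℝ)| := hAlip n (r : ℝ) r.2 t ht
    have h5 : L * |t - (r : ℝ)| ≤ L * (ε / (2 * L)) :=
      mul_le_mul_of_nonneg_left htr.le hLpos.le
    have h6 : L * (ε / (2 * L)) = ε / 2 := by field_simp
    calc |A n t| ≤ ε / 2 + (ε / 2) := by
          have := hn r hrF
          linarith [h3, h4, h5, h6.le]
      _ = ε := by ring
  -- Step D: Gronwall estimate
  have hgron : ∀ δ : ℝ, 0 < δ → ∀ n : ℕ, |y0n n - y0| ≤ δ →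
      (∀ t ∈ Set.Icc t0 t1, |A n t| ≤ δ) →
      ∀ t ∈ Set.Icc t0 t1, |yn n t - y t| ≤ 2 * δ * C := by
    intro δ hδ n hn0 hnA
    set d : ℝ → ℝ := fun s => yn n s - y s with hddef
    have hd_bd : ∀ s ∈ Set.Icc t0 t1, |d s| ≤ B := by
      intro s hs
      have h1 := hynB n s hs
      have h2 := hyB s hs
      rw [hddef]
      simp only []
      rw [abs_le]
      constructor
      · nlinarith [h1.1, h2.2]
      · nlinarith [h1.2, h2.1]
    have hd_contAt : ∀ s ∈ Set.Icc t0 t1, ContinuousAt d s :=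
      fun s hs => (hyn_contAt n s hs).sub (hy_contAt s hs)
    set k : ℝ → ℝ := fun s => -(yn n s + y s) + c1 * un n s with hkdef
    have hk_bd : ∀ s ∈ Set.Icc t0 t1, |k s| ≤ K := by
      intro s hs
      have h1 := hynB n s hs
      have h2 := hyB s hs
      have h3 := hun n s hs
      rw [hkdef, hKdef]
      simp only []
      rw [abs_le]
      constructor
      · nlinarith [h1.2, h2.2, h3.1, h3.2]
      · nlinarith [h1.1, h2.1, h3.1, h3.2, hw0]
    have hD : ∀ s ∈ Set.Icc t0 t1, HasDerivAt d (k s * d s + ψ n s) s := by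
      intro s hs
      have h1 := (hynode n s hs).sub (hyode s hs)
      convert h1 using 1
      case e'_4 => rfl
      case e'_5 => rfl
      case e'_8 => rfl
      rw [hkdef, hψdef, hddef]
      simp only []
      ring
    have hd_meas : AEStronglyMeasurable d (volume.restrict (Set.Icc t0 t1)) :=
      (hyn_meas n).sub hy_meas
    have hk_meas : AEStronglyMeasurable k (volume.restrict (Set.Icc t0 t1)) :=
      (((hyn_meas n).add hy_meas).neg).add
        ((hun_meas n).aestronglyMeasurable.const_mul c1)
    have hkd_int : IntegrableOn (fun s => k s * d s) (Set.Icc t0 t1) := by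
      refine integrableOn_of_bounded' measurableSet_Icc hvolIcc (hk_meas.mul hd_meas)
        (C := K * B) ?_
      intro s hs
      rw [abs_mul]
      exact mul_le_mul (hk_bd s hs) (hd_bd s hs) (abs_nonneg _) hK.le
    have hkd_ii : ∀ t ∈ Set.Icc t0 t1, IntervalIntegrable (fun s => k s * d s) volume t0 t :=
      fun t ht => (hkd_int.mono_set (Set.uIcc_subset_Icc ht0mem ht)).intervalIntegrable
    have hdabs_int : IntegrableOn (fun s => |d s|) (Set.Icc t0 t1) := by
      refine integrableOn_of_bounded' measurableSet_Icc hvolIcc hd_meas.norm (C := B) ?_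
      intro s hs
      rw [abs_abs]
      exact hd_bd s hs
    have hd_ii_abs : ∀ t ∈ Set.Icc t0 t1,
        IntervalIntegrable (fun s => |d s|) volume t0 t :=
      fun t ht => (hdabs_int.mono_set (Set.uIcc_subset_Icc ht0mem ht)).intervalIntegrable
    set Φ : ℝ → ℝ := fun t => ∫ s in t0..t, |d s| with hΦdef
    have hΦ_nonneg : ∀ t ∈ Set.Icc t0 t1, 0 ≤ Φ t :=
      fun t ht => intervalIntegral.integral_nonneg ht.1 (fun s _ => abs_nonneg _)
    have hstep : ∀ t ∈ Set.Icc t0 t1, |d t| ≤ K * Φ t + (δ + δ) := by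
      intro t ht
      have hsubt : Set.Icc t0 t ⊆ Set.Icc t0 t1 := Set.Icc_subset_Icc le_rfl ht.2
      have hsubu : Set.uIcc t0 t ⊆ Set.Icc t0 t1 := Set.uIcc_subset_Icc ht0mem ht
      have hψii := hψ_ii n t0 ht0mem t ht
      have hkdii := hkd_ii t ht
      have hFTC : ∫ s in t0..t, (k s * d s + ψ n s) = d t - d t0 :=
        intervalIntegral.integral_eq_sub_of_hasDerivAt (fun s hs => hD s (hsubu hs))
          (hkdii.add hψii)
      have hsplit2 : ∫ s in t0..t, (k s * d s + ψ n s)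
          = (∫ s in t0..t, k s * d s) + A n t :=
        intervalIntegral.integral_add hkdii hψii
      have hdt : d t = d t0 + ((∫ s in t0..t, k s * d s) + A n t) := by
        rw [← hsplit2]
        linarith [hFTC]
      have h1 : |∫ s in t0..t, k s * d s| ≤ K * Φ t := by
        calc |∫ s in t0..t, k s * d s| ≤ ∫ s in t0..t, |k s * d s| :=
              intervalIntegral.abs_integral_le_integral_abs ht.1
          _ ≤ ∫ s in t0..t, K * |d s| := by
              refine intervalIntegral.integral_mono_on ht.1 hkdii.abs
                ((hd_ii_abs t ht).const_mul K) ?_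
              intro s hs
              rw [abs_mul]
              exact mul_le_mul_of_nonneg_right (hk_bd s (hsubt hs)) (abs_nonneg _)
          _ = K * Φ t := by
              rw [hΦdef]
              exact intervalIntegral.integral_const_mul K _
      have h2 : |d t0| ≤ δ := by
        rw [hddef]
        simp only []
        rw [hyn0 n, hy0']
        exact hn0
      have h3 : |A n t| ≤ δ := hnA t ht
      calc |d t| = |d t0 + ((∫ s in t0..t, k s * d s) + A n t)| := by rw [← hdt]
        _ ≤ |d t0| + |(∫ s in t0..t, k s * d s) + A n t| := abs_add_le _ _
        _ ≤ |d t0| + (|∫ s in t0..t, k s * d s| + |A n t|) := by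
            linarith [abs_add_le (∫ s in t0..t, k s * d s) (A n t)]
        _ ≤ K * Φ t + (δ + δ) := by linarith
    have hΦ_cont : ContinuousOn Φ (Set.Icc t0 t1) := by
      have hint : IntegrableOn (fun s => |d s|) (Set.uIcc t0 t1) := by
        rw [Set.uIcc_of_le ht01.le]
        exact hdabs_int
      have := intervalIntegral.continuousOn_primitive_interval hint
      rwa [Set.uIcc_of_le ht01.le] at this
    have hΦ_deriv : ∀ t ∈ Set.Ico t0 t1, HasDerivWithinAt Φ (|d t|) (Set.Ici t) t := by
      intro t ht
      have htmem : t ∈ Set.Icc t0 t1 := ⟨ht.1, ht.2.le⟩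
      have hmeasat : StronglyMeasurableAtFilter (fun s => |d s|)
          (nhdsWithin t (Set.Ioi t)) volume := by
        have hmem1 : t ∈ Set.Ico t t1 := ⟨le_refl t, ht.2⟩
        have hmem2 : Set.Ioc t t1 ∈ nhdsWithin t (Set.Ioi t) :=
          Ioc_mem_nhdsGT_of_mem hmem1
        have hmem3 : Set.Ioc t t1 ⊆ Set.Icc t0 t1 :=
          fun x hx => ⟨ht.1.trans hx.1.le, hx.2⟩
        refine ⟨Set.Ioc t t1, hmem2, ?_⟩
        exact hd_meas.norm.mono_measure (Measure.restrict_mono hmem3 le_rfl)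
      exact intervalIntegral.integral_hasDerivWithinAt_right (hd_ii_abs t htmem)
        hmeasat ((hd_contAt t htmem).abs.continuousWithinAt)
    have hgb := norm_le_gronwallBound_of_norm_deriv_right_le (f := Φ)
      (f' := fun t => |d t|) (δ := 0) (K := K) (ε := δ + δ) (a := t0) (b := t1)
      hΦ_cont hΦ_deriv
      (by rw [Real.norm_eq_abs, hΦdef]; simp [intervalIntegral.integral_same])
      (by
        intro t ht
        have htmem : t ∈ Set.Icc t0 t1 := ⟨ht.1, ht.2.le⟩
        rw [Real.norm_eq_abs, Real.norm_eq_abs, abs_abs,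
          abs_of_nonneg (hΦ_nonneg t htmem)]
        exact hstep t htmem)
    intro t ht
    have h4 := hgb t ht
    rw [Real.norm_eq_abs, abs_of_nonneg (hΦ_nonneg t ht)] at h4
    have h5 := hstep t ht
    have h6 : gronwallBound 0 K (δ + δ) (t - t0)
        = (δ + δ) / K * (Real.exp (K * (t - t0)) - 1) := by
      rw [gronwallBound_of_K_ne_0 hK.ne']
      simp only []
      ring
    rw [h6] at h4
    have h8 : K * ((δ + δ) / K * (Real.exp (K * (t - t0)) - 1))
        = (δ + δ) * (Real.exp (K * (t - t0)) - 1) := by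
      field_simp
    have h7 : K * Φ t + (δ + δ) ≤ (δ + δ) * Real.exp (K * (t - t0)) := by
      have := mul_le_mul_of_nonneg_left h4 hK.le
      rw [h8] at this
      nlinarith
    have h9 : Real.exp (K * (t - t0)) ≤ C := by
      rw [hCdef]
      exact Real.exp_le_exp.2 (mul_le_mul_of_nonneg_left (by linarith [ht.2]) hK.le)
    have h10 : (0:ℝ) ≤ δ + δ := by linarith
    calc |yn n t - y t| = |d t| := rfl
      _ ≤ (δ + δ) * Real.exp (K * (t - t0)) := le_trans h5 h7
      _ ≤ (δ + δ) * C := mul_le_mul_of_nonneg_left h9 h10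
      _ = 2 * δ * C := by ring
  -- Step E: uniform convergence of trajectories
  have key : ∀ ε > 0, ∀ᶠ n in atTop, ∀ t ∈ Set.Icc t0 t1, |yn n t - y t| ≤ ε := by
    intro ε hε
    have hδ : (0:ℝ) < ε / (2 * C) := by positivity
    have h1 : ∀ᶠ n in atTop, |y0n n - y0| ≤ ε / (2 * C) := by
      filter_upwards [hy0conv (Metric.closedBall_mem_nhds y0 hδ)] with n hn
      rw [Set.mem_preimage, Metric.mem_closedBall, Real.dist_eq] at hn
      exact hn
    filter_upwards [h1, hAunif (ε / (2 * C)) hδ] with n hn1 hn2 t ht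
    have := hgron (ε / (2 * C)) hδ n hn1 hn2 t ht
    calc |yn n t - y t| ≤ 2 * (ε / (2 * C)) * C := this
      _ = ε := by field_simp
  -- Step F: assembly
  refine tendsto_of_subseq_tendsto fun ns hns => ?_
  obtain ⟨e', he', ms, hms, hconv⟩ :=
    (isCompact_Icc (a := t0) (b := t1)).tendsto_subseq (x := fun k => en (ns k))
      (fun k => hen (ns k))
  refine ⟨ms, ?_⟩
  have hnsms : Tendsto (fun k => ns (ms k)) atTop atTop := hns.comp hms.tendsto_atTop
  have hb : ∀ k, en (ns (ms k)) ∈ Set.Icc t0 t1 := fun k => hen _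
  have h1 : Tendsto (fun k => y (en (ns (ms k)))) atTop (nhds (y e')) :=
    ((hy_contAt e' he').tendsto).comp hconv
  have h2 : Tendsto (fun k => y (en (ns (ms k)))) atTop (nhds ys) := by
    rw [Metric.tendsto_atTop]
    intro ε hε
    have := hnsms.eventually (key (ε / 2) (half_pos hε))
    rw [eventually_atTop] at this
    obtain ⟨N, hN⟩ := this
    refine ⟨N, fun k hk => ?_⟩
    have h3 := hN k hk _ (hb k)
    rw [henexit (ns (ms k))] at h3
    rw [Real.dist_eq, abs_sub_comm]
    calc |ys - y (en (ns (ms k)))| ≤ ε / 2 := h3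
      _ < ε := half_lt_self hε
  have hyse : y e' = ys := tendsto_nhds_unique h1 h2
  have : e' = e := cross_unique hc1 hc2 hys hw1 hu hyode e' he' e he hyse heexit
  rw [← this]
  exact hconv
end
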